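/- For a subset Z of Baire space with the Hurewicz property H, Z is a bounded subset of Baire space: there exists g : ℕ → ℕ such that every f ∈ Z satisfies f(n) ≤ g(n) for all but finitely many n. -/

import Mathlib

open Set Filter

def BddBaire (Z : Set (ℕ → ℕ)) : Prop :=
  ∃ g : ℕ → ℕ, ∀ f ∈ Z, ∀ᶠ n in atTop, f n ≤ g n

def HurewiczH (Z : Set (ℕ → ℕ)) : Prop :=
  ∀ G : ℕ → Set (Set (ℕ → ℕ)),
    (∀ n, ∀ g ∈ G n, IsOpen g) →
    (∀ n, Z ⊆ ⋃₀ G n) →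
    ∃ F : ℕ → Set (Set (ℕ → ℕ)), (∀ n, (F n).Finite) ∧ (∀ n, F n ⊆ G n) ∧
      Z ⊆ ⋃ n, ⋂ m, ⋂ (_ : n ≤ m), ⋃₀ F m

theorem stmt7 (Z : Set (ℕ → ℕ)) (h : HurewiczH Z) : BddBaire Z := by
  set O : ℕ → ℕ → Set (ℕ → ℕ) := fun n k => {f | f n ≤ k} with hO
  obtain ⟨F, hfin, hsub, hcov⟩ := h (fun n => range (O n))
    (by
      rintro n g ⟨k, rfl⟩
      exact IsOpen.preimage (continuous_apply (A := fun _ : ℕ => ℕ) n) (isOpen_discrete {m : ℕ | m ≤ k}))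
    (by
      intro n f _
      exact ⟨O n (f n), ⟨f n, rfl⟩, show f n ≤ f n from le_refl _⟩)
  have hk : ∀ n, ∀ s ∈ F n, ∃ k, O n k = s := fun n s hs => hsub n hs
  choose! k hk using hk
  refine ⟨fun n => (hfin n).toFinset.sup (k n), fun f hf => ?_⟩
  obtain ⟨_, ⟨n, rfl⟩, hmem⟩ := hcov hf
  simp only [mem_iInter] at hmem
  rw [eventually_atTop]
  refine ⟨n, fun m hm => ?_⟩
  obtain ⟨s, hsF, hfs⟩ := hmem m hm
  have h1 : f m ≤ k m s := by
    have := hk m s hsF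
    rw [← this] at hfs
    exact hfs
  exact h1.trans (Finset.le_sup ((hfin m).mem_toFinset.mpr hsF))
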